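/- Let p ≥ 3 and q ≥ 2 be integers, and let ρ = (1 2 … p) ∈ S_p. There exists an involution σ ∈ S_p with (σρ)^q = 1 if and only if q has a prime divisor less than or equal to p. -/

import Mathlib

open Equiv List

namespace Stmt3Aux



variable {α : Type*} [DecidableEq α]

lemma swap_shift {a b c : α} (hab : a ≠ b) (hac : a ≠ c) (hcb : c ≠ b) :
    Equiv.swap a c * Equiv.swap c b = Equiv.swap a b * Equiv.swap a c := by
  ext x
  simp only [Equiv.Perm.mul_apply, Equiv.swap_apply_def]
  split_ifs <;> simp_all

lemma chain (b : α) (v : List α) : ∀ (u : List α) (a : α), (a :: u ++ b :: v).Nodup →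
    (a :: u ++ b :: v).formPerm = Equiv.swap a b * (a :: u).formPerm * (b :: v).formPerm := by
  intro u
  induction u with
  | nil =>
      intro a h
      rw [List.singleton_append, List.formPerm_cons_cons, List.formPerm_singleton, mul_one]
  | cons c u ih =>
      intro a h
      have h' : (c :: u ++ b :: v).Nodup := (List.nodup_cons.mp h).2
      have ha : a ∉ (c :: u ++ b :: v) := (List.nodup_cons.mp h).1
      have hac : a ≠ c := by simp at ha; tauto
      have hab : a ≠ b := by simp at ha; tauto
      have hcb : c ≠ b := by
        have hc : c ∉ (u ++ b :: v) := (List.nodup_cons.mp h').1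
        simp at hc; tauto
      have e1 : (a :: c :: u ++ b :: v).formPerm
          = Equiv.swap a c * (c :: u ++ b :: v).formPerm :=
        List.formPerm_cons_cons _ _ _
      rw [e1, ih c h', List.formPerm_cons_cons]
      rw [← mul_assoc, ← mul_assoc, swap_shift hab hac hcb]
      simp only [mul_assoc]

lemma formPerm_range'_apply (a n i : ℕ) (h : i < n) :
    (List.range' a n).formPerm (a + i) = a + (i + 1) % n := by
  have hlen : (List.range' a n).length = n := by simp
  have hi : i < (List.range' a n).length := by simpa [hlen]
  have := List.formPerm_apply_getElem (List.range' a n) (List.nodup_range') i hi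
  simpa [List.getElem_range'_1] using this

lemma formPerm_range'_fix (a n x : ℕ) (hx : x < a ∨ a + n ≤ x) :
    (List.range' a n).formPerm x = x := by
  apply List.formPerm_apply_of_notMem
  rw [List.mem_range'_1]; omega


lemma base (d n a : ℕ) (hd : 2 ≤ d) (h1 : d ≤ n) (h2 : n < 2 * d) :
    ∃ σ τ : Equiv.Perm ℕ, σ * σ = 1 ∧ τ ^ d = 1 ∧
      σ * τ = (List.range' a n).formPerm ∧ σ a = a ∧
      (∀ x, x < a ∨ a + n ≤ x → σ x = x) ∧ (∀ x, x < a ∨ a + n ≤ x → τ x = x) := by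
  set c := 2 * d - n with hc
  set r := n - d with hr
  set f : ℕ → ℕ := fun x => if x < a + c ∨ a + n ≤ x then x
    else if (x - (a + c)) % 2 = 0 then x + 1 else x - 1 with hf
  have hinv : Function.Involutive f := by
    intro x
    simp only [hf]
    split_ifs <;> omega
  set σ : Equiv.Perm ℕ := ⟨f, f, hinv.leftInverse, hinv.rightInverse⟩ with hσdef
  have hσ : ∀ x, σ x = f x := fun x => rfl
  set L : List ℕ := List.range' a c ++ (List.range r).map (fun j => a + c + 2*j + 1) with hL
  have hlen : L.length = d := by simp [hL]; omega
  have hnodupL : L.Nodup := by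
    rw [hL]
    refine List.Nodup.append (List.nodup_range') ?_ ?_
    · exact List.Nodup.map (fun x y hxy => by omega) List.nodup_range
    · intro x hx hy
      rw [List.mem_range'_1] at hx
      simp only [List.mem_map, List.mem_range] at hy
      omega
  set val : ℕ → ℕ := fun i => if i < c then a + i else a + c + 2*(i-c) + 1 with hval
  have hv : ∀ (i : ℕ) (h : i < L.length), L[i] = val i := by
    intro i h
    have h' : i < d := hlen ▸ h
    rw [List.getElem_of_eq hL h]
    by_cases hic : i < c
    · rw [List.getElem_append_left (by simpa using hic)]
      simp only [List.getElem_range'_1, hval]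
      rw [if_pos hic]
    · rw [List.getElem_append_right (by simpa using (by omega : c ≤ i))]
      simp only [List.getElem_map, List.getElem_range, List.length_range', hval]
      rw [if_neg hic]
  have happ : ∀ i, i < d → L.formPerm (val i) = val ((i+1) % d) := by
    intro i hi
    have hi' : i < L.length := by omega
    have hi2 : (i+1) % d < L.length := by rw [hlen]; exact Nat.mod_lt _ (by omega)
    have key := List.formPerm_apply_getElem L hnodupL i hi'
    rw [hv i hi'] at key
    have hmod : (i+1) % L.length = (i+1) % d := by rw [hlen]
    rw [key, hv _ (Nat.mod_lt _ (by omega)), hmod]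
  have hnotmem : ∀ k, k < r → (a + c + 2*k) ∉ L := by
    intro k hk
    rw [hL]
    simp only [List.mem_append, List.mem_range'_1, List.mem_map, List.mem_range, not_or]
    constructor
    · omega
    · rintro ⟨j, hj, hje⟩; omega
  have hτfix : ∀ x, x < a ∨ a + n ≤ x → L.formPerm x = x := by
    intro x hx
    apply List.formPerm_apply_of_notMem
    rw [hL]
    simp only [List.mem_append, List.mem_range'_1, List.mem_map, List.mem_range, not_or]
    exact ⟨by omega, by rintro ⟨j, hj, hje⟩; omega⟩
  refine ⟨σ, L.formPerm, ?_, ?_, ?_, ?_, ?_, hτfix⟩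
  · ext x
    simp only [Equiv.Perm.mul_apply, Equiv.Perm.one_apply]
    exact hinv x
  · rw [← hlen]
    exact List.formPerm_pow_length_eq_one_of_nodup L hnodupL
  · ext x
    simp only [Equiv.Perm.mul_apply]
    by_cases hx : a ≤ x ∧ x < a + n
    · obtain ⟨i, rfl, hi⟩ : ∃ i, x = a + i ∧ i < n := ⟨x - a, by omega, by omega⟩
      rw [formPerm_range'_apply a n i hi]
      by_cases hic : i < c
      · have hx1 : a + i = val i := by simp only [hval]; rw [if_pos hic]
        rw [hx1, happ i (by omega)]
        by_cases hA : i + 1 < c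
        · rw [Nat.mod_eq_of_lt (by omega : i + 1 < d), Nat.mod_eq_of_lt (by omega : i + 1 < n)]
          rw [hσ]; simp only [hf, hval]
          split_ifs <;> omega
        · by_cases hB : r = 0
          · -- i + 1 = c = d = n
            have e0 : (i + 1) % d = 0 := by
              have hh : i + 1 = d := by omega
              simp [hh]
            have e1 : (i + 1) % n = 0 := by
              have hh : i + 1 = n := by omega
              simp [hh]
            rw [e0, e1]
            rw [hσ]; simp only [hf, hval]
            split_ifs <;> omega
          · -- i + 1 = c < d
            rw [Nat.mod_eq_of_lt (by omega : i + 1 < d), Nat.mod_eq_of_lt (by omega : i + 1 < n)]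
            rw [hσ]; simp only [hf, hval]
            split_ifs <;> omega
      · by_cases hpar : (i - c) % 2 = 0
        · have hne : a + i = a + c + 2*((i-c)/2) := by omega
          rw [hne, List.formPerm_apply_of_notMem (hnotmem ((i-c)/2) (by omega))]
          rw [Nat.mod_eq_of_lt (by omega : i + 1 < n)]
          rw [hσ]; simp only [hf]
          split_ifs <;> omega
        · by_cases hD : i < n - 1
          · have hidx : c + (i-c)/2 < d := by omega
            have hx1 : a + i = val (c + (i-c)/2) := by
              simp only [hval]; rw [if_neg (by omega)]; omega
            rw [hx1, happ _ hidx]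
            rw [Nat.mod_eq_of_lt (by omega : c + (i-c)/2 + 1 < d),
              Nat.mod_eq_of_lt (by omega : i + 1 < n)]
            rw [hσ]; simp only [hf, hval]
            split_ifs <;> omega
          · -- i = n - 1, odd case: index d - 1
            have hie : i = n - 1 := by omega
            have hx1 : a + i = val (d - 1) := by
              simp only [hval]; rw [if_neg (by omega)]; omega
            rw [hx1, happ _ (by omega)]
            have e0 : (d - 1 + 1) % d = 0 := by
              have : d - 1 + 1 = d := by omega
              simp [this]
            have e1 : (i + 1) % n = 0 := by
              have : i + 1 = n := by omega
              simp [this]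
            rw [e0, e1]
            rw [hσ]; simp only [hf, hval]
            split_ifs <;> omega
    · rw [hτfix x (by omega)]
      rw [formPerm_range'_fix a n x (by omega)]
      rw [hσ]; simp only [hf]
      split_ifs <;> omega
  · rw [hσ]; simp only [hf]; split_ifs <;> omega
  · intro x hx
    rw [hσ]; simp only [hf]; split_ifs <;> omega


lemma key (d : ℕ) (hd : 2 ≤ d) : ∀ n a : ℕ, d ≤ n →
    ∃ σ τ : Equiv.Perm ℕ, σ * σ = 1 ∧ τ ^ d = 1 ∧
      σ * τ = (List.range' a n).formPerm ∧ σ a = a ∧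
      (∀ x, x < a ∨ a + n ≤ x → σ x = x) ∧ (∀ x, x < a ∨ a + n ≤ x → τ x = x) := by
  intro n
  induction n using Nat.strong_induction_on with
  | _ n ih =>
    intro a hn
    by_cases hsmall : n < 2 * d
    · exact base d n a hd hn hsmall
    · push_neg at hsmall
      obtain ⟨σ'', τ'', hs1, hs2, hs3, hs4, hs5, hs6⟩ :=
        ih (n - d) (by omega) (a + d - 1) (by omega)
      set z := a + n - 1 with hz
      set u : List ℕ := List.range' (a + d - 1) (n - d) with hu
      set v : List ℕ := z :: List.range' a (d - 1) with hv
      -- u as cons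
      have e1 : u = (a + d - 1) :: List.range' (a + d) (n - d - 1) := by
        rw [hu, show n - d = (n - d - 1) + 1 by omega, List.range'_succ,
          show a + d - 1 + 1 = a + d by omega]
        simp
      -- nodup of u ++ v
      have hnodup_uv : (u ++ v).Nodup := by
        rw [hu, hv]
        refine List.Nodup.append (List.nodup_range') ?_ ?_
        · refine List.nodup_cons.mpr ⟨?_, List.nodup_range'⟩
          rw [List.mem_range'_1]; omega
        · intro x hx hxv
          rw [List.mem_range'_1] at hx
          rcases List.mem_cons.mp hxv with h | h
          · omega
          · rw [List.mem_range'_1] at h; omega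
      -- (u ++ v) is a rotation of range' a n
      have e2 : (u ++ v).formPerm = (List.range' a n).formPerm := by
        have h3 : u ++ v = List.range' (a + d - 1) (n - d + 1) ++ List.range' a (d - 1) := by
          rw [hu, hv, show n - d + 1 = (n - d) + 1 from rfl, List.range'_concat,
            show a + d - 1 + 1 * (n - d) = z by omega]
          simp
        have h4 : List.range' a (d - 1) ++ List.range' (a + d - 1) (n - d + 1)
            = List.range' a n := by
          have h5 := List.range'_append (s := a) (m := d - 1) (n := n - d + 1) (step := 1)
          rw [show a + 1 * (d - 1) = a + d - 1 by omega, show d - 1 + (n - d + 1) = n by omega]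
            at h5
          exact h5
        rw [h3]
        refine List.formPerm_eq_of_isRotated ?_ ?_
        · rw [← h3]; exact hnodup_uv
        · rw [← h4]; exact List.isRotated_append
      -- chain decomposition
      have e3 : (u ++ v).formPerm = Equiv.swap (a + d - 1) z * u.formPerm * v.formPerm := by
        rw [e1] at hnodup_uv ⊢
        rw [hv] at hnodup_uv ⊢
        exact chain z (List.range' a (d - 1)) (List.range' (a + d) (n - d - 1)) (a + d - 1)
          hnodup_uv
      have hfix2 : σ'' z = z := hs5 z (Or.inr (by omega))
      have hswap_comm : σ'' * Equiv.swap (a + d - 1) z = Equiv.swap (a + d - 1) z * σ'' := by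
        have h6 := Equiv.mul_swap_eq_swap_mul σ'' (a + d - 1) z
        rw [hs4, hfix2] at h6
        exact h6
      have hvpow : v.formPerm ^ d = 1 := by
        have hlv : v.length = d := by rw [hv]; simp; omega
        have hnv : v.Nodup := by
          rw [hv]
          refine List.nodup_cons.mpr ⟨?_, List.nodup_range'⟩
          rw [List.mem_range'_1]; omega
        rw [← hlv]
        exact List.formPerm_pow_length_eq_one_of_nodup v hnv
      have hcomm : Commute τ'' v.formPerm := by
        apply Equiv.Perm.Disjoint.commute
        intro x
        by_cases hx : a + d - 1 ≤ x ∧ x < a + n - 1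
        · right
          apply List.formPerm_apply_of_notMem
          rw [hv]
          intro hmem
          rcases List.mem_cons.mp hmem with h | h
          · omega
          · rw [List.mem_range'_1] at h; omega
        · left; exact hs6 x (by omega)
      refine ⟨Equiv.swap (a + d - 1) z * σ'', τ'' * v.formPerm, ?_, ?_, ?_, ?_, ?_, ?_⟩
      · have h7 : Equiv.swap (a + d - 1) z * σ'' * (Equiv.swap (a + d - 1) z * σ'')
            = Equiv.swap (a + d - 1) z * (σ'' * Equiv.swap (a + d - 1) z) * σ'' := by
          simp only [mul_assoc]
        rw [h7, hswap_comm]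
        simp only [← mul_assoc]
        rw [Equiv.swap_mul_self, one_mul, hs1]
      · rw [hcomm.mul_pow, hs2, hvpow, one_mul]
      · have h8 : Equiv.swap (a + d - 1) z * σ'' * (τ'' * v.formPerm)
            = Equiv.swap (a + d - 1) z * (σ'' * τ'') * v.formPerm := by
          simp only [mul_assoc]
        rw [h8, hs3, ← e3, e2]
      · simp only [Equiv.Perm.mul_apply]
        rw [hs5 a (Or.inl (by omega))]
        exact Equiv.swap_apply_of_ne_of_ne (by omega) (by omega)
      · intro x hx
        simp only [Equiv.Perm.mul_apply]
        rw [hs5 x (by omega)]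
        exact Equiv.swap_apply_of_ne_of_ne (by omega) (by omega)
      · intro x hx
        simp only [Equiv.Perm.mul_apply]
        have h9 : v.formPerm x = x := by
          apply List.formPerm_apply_of_notMem
          rw [hv]
          intro hmem
          rcases List.mem_cons.mp hmem with h | h
          · omega
          · rw [List.mem_range'_1] at h; omega
        rw [h9]
        exact hs6 x (by omega)

lemma mapsto (p : ℕ) (f : Equiv.Perm ℕ) (hf : ∀ x, p ≤ x → f x = x) :
    ∀ x, x < p → f x < p := by
  intro x hx
  by_contra h
  push_neg at h
  have h2 := hf (f x) h
  have h3 := f.injective h2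
  omega

lemma invfix (p : ℕ) (f : Equiv.Perm ℕ) (hf : ∀ x, p ≤ x → f x = x) :
    ∀ x, p ≤ x → f⁻¹ x = x := fun x hx =>
  f.injective (by rw [← Equiv.Perm.mul_apply, mul_inv_cancel, Equiv.Perm.one_apply, hf x hx])

def toFinPerm (p : ℕ) (f : Equiv.Perm ℕ) (hf : ∀ x, p ≤ x → f x = x) : Equiv.Perm (Fin p) where
  toFun i := ⟨f i, mapsto p f hf i i.2⟩
  invFun i := ⟨f⁻¹ i, mapsto p f⁻¹ (invfix p f hf) i i.2⟩
  left_inv i := Fin.ext (by simp)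
  right_inv i := Fin.ext (by simp)

@[simp] lemma toFinPerm_apply (p : ℕ) (f : Equiv.Perm ℕ) (hf : ∀ x, p ≤ x → f x = x)
    (i : Fin p) : (toFinPerm p f hf i : ℕ) = f i := rfl

lemma toFinPerm_pow_val (p : ℕ) (f : Equiv.Perm ℕ) (hf : ∀ x, p ≤ x → f x = x) (k : ℕ)
    (i : Fin p) : (((toFinPerm p f hf) ^ k) i : ℕ) = (f ^ k) i := by
  induction k generalizing i with
  | zero => simp
  | succ k ihk =>
      rw [pow_succ, pow_succ, Equiv.Perm.mul_apply, Equiv.Perm.mul_apply, ihk, toFinPerm_apply]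

lemma toFinPerm_rot (p : ℕ) (hp : 2 ≤ p) (h : ∀ x, p ≤ x → (List.range' 0 p).formPerm x = x) :
    toFinPerm p (List.range' 0 p).formPerm h = finRotate p := by
  obtain ⟨m, rfl⟩ : ∃ m, p = m + 1 := ⟨p - 1, by omega⟩
  apply Equiv.ext; intro i; apply Fin.ext
  rw [finRotate_succ_apply, toFinPerm_apply]
  have key := formPerm_range'_apply 0 (m+1) i i.2
  rw [Nat.zero_add, Nat.zero_add] at key
  rw [key, Fin.val_add, Fin.val_one']
  rw [Nat.mod_eq_of_lt (by omega : 1 < m + 1)]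



end Stmt3Aux

theorem stmt_3 (p q : ℕ) (hp : 3 ≤ p) (hq : 2 ≤ q) :
    (∃ σ : Equiv.Perm (Fin p), σ * σ = 1 ∧ (σ * finRotate p) ^ q = 1) ↔
      ∃ d : ℕ, d.Prime ∧ d ∣ q ∧ d ≤ p := by
  constructor
  · rintro ⟨σ, hσ, hpow⟩
    set g := σ * finRotate p with hg
    have hgne : g ≠ 1 := by
      intro h
      have hrot : finRotate p = σ := by
        have h1 : σ * g = σ * 1 := by rw [h]
        rw [hg, ← mul_assoc, hσ, one_mul, mul_one] at h1
        exact h1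
      have h2 : (finRotate p) ^ 2 = 1 := by rw [pow_two, hrot, hσ]
      have h3 : orderOf (finRotate p) ∣ 2 := orderOf_dvd_of_pow_eq_one h2
      obtain ⟨m, rfl⟩ : ∃ m, p = m + 2 := ⟨p - 2, by omega⟩
      have h4 : orderOf (finRotate (m + 2)) = m + 2 := by
        rw [(isCycle_finRotate).orderOf, support_finRotate, Finset.card_univ,
          Fintype.card_fin]
      rw [h4] at h3
      have := Nat.le_of_dvd (by norm_num) h3
      omega
    have hord : orderOf g ∣ q := orderOf_dvd_of_pow_eq_one hpow
    have h1 : orderOf g ≠ 1 := by simpa [orderOf_eq_one_iff] using hgne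
    refine ⟨(orderOf g).minFac, Nat.minFac_prime h1, (Nat.minFac_dvd _).trans hord, ?_⟩
    have h5 : orderOf g ∣ Nat.factorial p := by
      have h6 : orderOf g ∣ Fintype.card (Equiv.Perm (Fin p)) := orderOf_dvd_card
      rwa [Fintype.card_perm, Fintype.card_fin] at h6
    exact (Nat.Prime.dvd_factorial (Nat.minFac_prime h1)).mp ((Nat.minFac_dvd _).trans h5)
  · rintro ⟨d, hdp, hdq, hdle⟩
    have hd2 : 2 ≤ d := hdp.two_le
    obtain ⟨σ, τ, k1, k2, k3, k4, k5, k6⟩ := Stmt3Aux.key d hd2 p 0 hdle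
    have hfixσ : ∀ x, p ≤ x → σ x = x := fun x hx => k5 x (Or.inr (by omega))
    have hfixτ : ∀ x, p ≤ x → τ x = x := fun x hx => k6 x (Or.inr (by omega))
    refine ⟨Stmt3Aux.toFinPerm p σ hfixσ, ?_, ?_⟩
    · apply Equiv.ext; intro i; apply Fin.ext
      have e1 : ((Stmt3Aux.toFinPerm p σ hfixσ * Stmt3Aux.toFinPerm p σ hfixσ) i : ℕ)
          = σ (σ i) := rfl
      rw [e1, ← Equiv.Perm.mul_apply, k1]
      rfl
    · have hrotfix : ∀ x, p ≤ x → (List.range' 0 p).formPerm x = x := fun x hx =>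
        Stmt3Aux.formPerm_range'_fix 0 p x (by omega)
      have hR : Stmt3Aux.toFinPerm p (List.range' 0 p).formPerm hrotfix = finRotate p :=
        Stmt3Aux.toFinPerm_rot p (by omega) _
      have hτfin : Stmt3Aux.toFinPerm p σ hfixσ * finRotate p = Stmt3Aux.toFinPerm p τ hfixτ := by
        rw [← hR]
        apply Equiv.ext; intro i; apply Fin.ext
        have e2 : ((Stmt3Aux.toFinPerm p σ hfixσ *
            Stmt3Aux.toFinPerm p (List.range' 0 p).formPerm hrotfix) i : ℕ)
            = σ ((List.range' 0 p).formPerm i) := rfl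
        rw [e2, ← Equiv.Perm.mul_apply, ← k3, ← mul_assoc, k1, one_mul]
        rfl
      rw [hτfin]
      apply Equiv.ext; intro i; apply Fin.ext
      rw [Stmt3Aux.toFinPerm_pow_val]
      have hτq : τ ^ q = 1 := by
        obtain ⟨e, rfl⟩ := hdq
        rw [pow_mul, k2, one_pow]
      rw [hτq]
      rfl
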